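/- For P, Q ∈ Γ_n with 0 < r ≤ p_i/q_i ≤ R for all i, the relative arithmetic-geometric divergence G(P||Q) = ∑((p_i+q_i)/2)ln((p_i+q_i)/(2p_i)) satisfies (1/(2(R+1)²))·J(P||Q) ≤ G(P||Q) ≤ (1/(2(r+1)²))·J(P||Q), where J(P||Q) = ∑(p_i - q_i)ln(p_i/q_i). -/

import Mathlib

open Finset Real Set

noncomputable def Ff (c x : ℝ) : ℝ :=
  ((x+1)/2)*(Real.log (x+1) - Real.log 2 - Real.log x) + (x-1)/2 - c*((x-1)*Real.log x)

noncomputable def Ff1 (c x : ℝ) : ℝ :=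
  (1/2)*(Real.log (x+1) - Real.log 2 - Real.log x) + 1/2 - 1/(2*x)
    - c*(Real.log x + (x-1)/x)

noncomputable def Ff2 (c x : ℝ) : ℝ :=
  (1/2)*(1/(x+1) - 1/x) + 1/(2*x^2) - c*(1/x + 1/x^2)

lemma hasDerivAt_Ff (c x : ℝ) (hx : 0 < x) : HasDerivAt (Ff c) (Ff1 c x) x := by
  have hx1 : (0:ℝ) < x + 1 := by linarith
  have hlog1 : HasDerivAt (fun y : ℝ => Real.log (y+1)) (1/(x+1)) x := by
    simpa using ((hasDerivAt_id x).add_const 1).log hx1.ne'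
  have hlog : HasDerivAt Real.log (1/x) x := by
    simpa [one_div] using Real.hasDerivAt_log hx.ne'
  have hL : HasDerivAt (fun y : ℝ => Real.log (y+1) - Real.log 2 - Real.log y)
      (1/(x+1) - 1/x) x := by
    exact (hlog1.sub_const (Real.log 2)).sub hlog
  have hA : HasDerivAt (fun y : ℝ => (y+1)/2) (1/2) x := by
    simpa using (((hasDerivAt_id x).add_const 1).div_const 2)
  have h1 : HasDerivAt (fun y : ℝ => ((y+1)/2)*(Real.log (y+1) - Real.log 2 - Real.log y))
      ((1/2)*(Real.log (x+1) - Real.log 2 - Real.log x) + ((x+1)/2)*(1/(x+1) - 1/x)) x :=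
    hA.mul hL
  have h2 : HasDerivAt (fun y : ℝ => (y-1)/2) (1/2) x := by
    simpa using (((hasDerivAt_id x).sub_const 1).div_const 2)
  have h3 : HasDerivAt (fun y : ℝ => c*((y-1)*Real.log y))
      (c*(1*Real.log x + (x-1)*(1/x))) x :=
    (((hasDerivAt_id x).sub_const 1).mul hlog).const_mul c
  have := (h1.add h2).sub h3
  refine this.congr_deriv ?_
  unfold Ff1
  field_simp
  ring

lemma hasDerivAt_Ff1 (c x : ℝ) (hx : 0 < x) : HasDerivAt (Ff1 c) (Ff2 c x) x := by
  have hx1 : (0:ℝ) < x + 1 := by linarith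
  have hlog1 : HasDerivAt (fun y : ℝ => Real.log (y+1)) (1/(x+1)) x := by
    simpa using ((hasDerivAt_id x).add_const 1).log hx1.ne'
  have hlog : HasDerivAt Real.log (1/x) x := by
    simpa [one_div] using Real.hasDerivAt_log hx.ne'
  have hL : HasDerivAt (fun y : ℝ => Real.log (y+1) - Real.log 2 - Real.log y)
      (1/(x+1) - 1/x) x := by
    exact (hlog1.sub_const (Real.log 2)).sub hlog
  have hinv : HasDerivAt (fun y : ℝ => 1/(2*y)) (-(2)/(2*x)^2) x := by
    have := (hasDerivAt_id x).const_mul (2:ℝ)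
    exact (HasDerivAt.div (hasDerivAt_const x 1) (by simpa using this) (by positivity)).congr_deriv
      (by field_simp; ring)
  have hfrac : HasDerivAt (fun y : ℝ => (y-1)/y) ((1*x - (x-1)*1)/x^2) x :=
    HasDerivAt.div ((hasDerivAt_id x).sub_const 1) (hasDerivAt_id x) hx.ne'
  have h1 := (hL.const_mul (1/2:ℝ)).add_const (1/2:ℝ)
  have h2 := h1.sub hinv
  have h3 := (hlog.add hfrac).const_mul c
  have := h2.sub h3
  refine this.congr_deriv ?_
  unfold Ff2; field_simp; ring

lemma Ff1_one (c : ℝ) : Ff1 c 1 = 0 := by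
  unfold Ff1; norm_num

lemma Ff_one (c : ℝ) : Ff c 1 = 0 := by
  unfold Ff; norm_num

lemma Ff1_monoOn (c r R : ℝ) (hr : 0 < r) (hF2 : ∀ y ∈ Icc r R, 0 ≤ Ff2 c y) :
    MonotoneOn (Ff1 c) (Icc r R) := by
  apply monotoneOn_of_deriv_nonneg (convex_Icc r R)
  · intro y hy
    exact (hasDerivAt_Ff1 c y (lt_of_lt_of_le hr hy.1)).continuousAt.continuousWithinAt
  · intro y hy
    rw [interior_Icc] at hy
    exact (hasDerivAt_Ff1 c y (lt_trans hr hy.1)).differentiableAt.differentiableWithinAt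
  · intro y hy
    rw [interior_Icc] at hy
    rw [(hasDerivAt_Ff1 c y (lt_trans hr hy.1)).deriv]
    exact hF2 y ⟨hy.1.le, hy.2.le⟩

lemma Ff1_antiOn (c r R : ℝ) (hr : 0 < r) (hF2 : ∀ y ∈ Icc r R, Ff2 c y ≤ 0) :
    AntitoneOn (Ff1 c) (Icc r R) := by
  apply antitoneOn_of_deriv_nonpos (convex_Icc r R)
  · intro y hy
    exact (hasDerivAt_Ff1 c y (lt_of_lt_of_le hr hy.1)).continuousAt.continuousWithinAt
  · intro y hy
    rw [interior_Icc] at hy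
    exact (hasDerivAt_Ff1 c y (lt_trans hr hy.1)).differentiableAt.differentiableWithinAt
  · intro y hy
    rw [interior_Icc] at hy
    rw [(hasDerivAt_Ff1 c y (lt_trans hr hy.1)).deriv]
    exact hF2 y ⟨hy.1.le, hy.2.le⟩

lemma Ff_nonneg (c r R x : ℝ) (hr : 0 < r) (h1r : r ≤ 1) (h1R : 1 ≤ R)
    (hx : x ∈ Icc r R) (hF2 : ∀ y ∈ Icc r R, 0 ≤ Ff2 c y) : 0 ≤ Ff c x := by
  have hmono := Ff1_monoOn c r R hr hF2
  have h1mem : (1:ℝ) ∈ Icc r R := ⟨h1r, h1R⟩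
  rcases le_total x 1 with hx1 | hx1
  · -- Ff antitone on [r,1]
    have hanti : AntitoneOn (Ff c) (Icc r 1) := by
      apply antitoneOn_of_deriv_nonpos (convex_Icc r 1)
      · intro y hy
        exact (hasDerivAt_Ff c y (lt_of_lt_of_le hr hy.1)).continuousAt.continuousWithinAt
      · intro y hy
        rw [interior_Icc] at hy
        exact (hasDerivAt_Ff c y (lt_trans hr hy.1)).differentiableAt.differentiableWithinAt
      · intro y hy
        rw [interior_Icc] at hy
        rw [(hasDerivAt_Ff c y (lt_trans hr hy.1)).deriv]
        have := hmono ⟨hy.1.le, le_trans hy.2.le h1R⟩ h1mem hy.2.le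
        rw [Ff1_one] at this
        exact this
    have := hanti ⟨hx.1, hx1⟩ ⟨h1r, le_refl 1⟩ hx1
    rwa [Ff_one] at this
  · have hmono' : MonotoneOn (Ff c) (Icc 1 R) := by
      apply monotoneOn_of_deriv_nonneg (convex_Icc 1 R)
      · intro y hy
        exact (hasDerivAt_Ff c y (lt_of_lt_of_le zero_lt_one hy.1)).continuousAt.continuousWithinAt
      · intro y hy
        rw [interior_Icc] at hy
        exact (hasDerivAt_Ff c y (lt_trans zero_lt_one hy.1)).differentiableAt.differentiableWithinAt
      · intro y hy
        rw [interior_Icc] at hy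
        rw [(hasDerivAt_Ff c y (lt_trans zero_lt_one hy.1)).deriv]
        have := hmono h1mem ⟨le_trans h1r hy.1.le, hy.2.le⟩ hy.1.le
        rw [Ff1_one] at this
        exact this
    have := hmono' ⟨le_refl 1, h1R⟩ ⟨hx1, hx.2⟩ hx1
    rwa [Ff_one] at this

lemma Ff_nonpos (c r R x : ℝ) (hr : 0 < r) (h1r : r ≤ 1) (h1R : 1 ≤ R)
    (hx : x ∈ Icc r R) (hF2 : ∀ y ∈ Icc r R, Ff2 c y ≤ 0) : Ff c x ≤ 0 := by
  have hanti := Ff1_antiOn c r R hr hF2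
  have h1mem : (1:ℝ) ∈ Icc r R := ⟨h1r, h1R⟩
  rcases le_total x 1 with hx1 | hx1
  · have hmono' : MonotoneOn (Ff c) (Icc r 1) := by
      apply monotoneOn_of_deriv_nonneg (convex_Icc r 1)
      · intro y hy
        exact (hasDerivAt_Ff c y (lt_of_lt_of_le hr hy.1)).continuousAt.continuousWithinAt
      · intro y hy
        rw [interior_Icc] at hy
        exact (hasDerivAt_Ff c y (lt_trans hr hy.1)).differentiableAt.differentiableWithinAt
      · intro y hy
        rw [interior_Icc] at hy
        rw [(hasDerivAt_Ff c y (lt_trans hr hy.1)).deriv]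
        have := hanti ⟨hy.1.le, le_trans hy.2.le h1R⟩ h1mem hy.2.le
        rw [Ff1_one] at this
        exact this
    have := hmono' ⟨hx.1, hx1⟩ ⟨h1r, le_refl 1⟩ hx1
    rwa [Ff_one] at this
  · have hanti' : AntitoneOn (Ff c) (Icc 1 R) := by
      apply antitoneOn_of_deriv_nonpos (convex_Icc 1 R)
      · intro y hy
        exact (hasDerivAt_Ff c y (lt_of_lt_of_le zero_lt_one hy.1)).continuousAt.continuousWithinAt
      · intro y hy
        rw [interior_Icc] at hy
        exact (hasDerivAt_Ff c y (lt_trans zero_lt_one hy.1)).differentiableAt.differentiableWithinAt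
      · intro y hy
        rw [interior_Icc] at hy
        rw [(hasDerivAt_Ff c y (lt_trans zero_lt_one hy.1)).deriv]
        have := hanti h1mem ⟨le_trans h1r hy.1.le, hy.2.le⟩ hy.1.le
        rw [Ff1_one] at this
        exact this
    have := hanti' ⟨le_refl 1, h1R⟩ ⟨hx1, hx.2⟩ hx1
    rwa [Ff_one] at this

theorem stmt14 (n : ℕ) (p q : Fin n → ℝ)
    (hp : ∀ i, 0 < p i) (hq : ∀ i, 0 < q i)
    (hp1 : ∑ i, p i = 1) (hq1 : ∑ i, q i = 1)
    (r R : ℝ) (hr : 0 < r) (hrR : ∀ i, r ≤ p i / q i ∧ p i / q i ≤ R) :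
    (1/(2*(R+1)^2)) * (∑ i, (p i - q i) * Real.log (p i / q i)) ≤ (∑ i, ((p i + q i)/2) * Real.log ((p i + q i) / (2 * p i))) ∧ (∑ i, ((p i + q i)/2) * Real.log ((p i + q i) / (2 * p i))) ≤ (1/(2*(r+1)^2)) * (∑ i, (p i - q i) * Real.log (p i / q i)) := by
  have hn : n ≠ 0 := by rintro rfl; simp at hp1
  have hne : (Finset.univ : Finset (Fin n)).Nonempty := by
    rw [Finset.univ_nonempty_iff]; exact Fin.pos_iff_nonempty.mp (Nat.pos_of_ne_zero hn)
  have h1R : 1 ≤ R := by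
    by_contra hR
    push_neg at hR
    have hlt : ∀ i ∈ Finset.univ, p i < q i := fun i _ => by
      have hx : p i / q i < 1 := lt_of_le_of_lt (hrR i).2 hR
      exact (div_lt_one (hq i)).mp hx
    have := Finset.sum_lt_sum_of_nonempty hne hlt
    rw [hp1, hq1] at this; exact lt_irrefl _ this
  have hr1 : r ≤ 1 := by
    by_contra hr'
    push_neg at hr'
    have hlt : ∀ i ∈ Finset.univ, q i < p i := fun i _ => by
      have hx : 1 < p i / q i := lt_of_lt_of_le hr' (hrR i).1
      exact (one_lt_div (hq i)).mp hx
    have := Finset.sum_lt_sum_of_nonempty hne hlt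
    rw [hp1, hq1] at this; exact lt_irrefl _ this
  have key : ∀ c : ℝ, ∀ i, q i * Ff c (p i / q i)
      = ((p i + q i)/2) * Real.log ((p i + q i)/(2 * p i)) + (p i - q i)/2
        - c * ((p i - q i) * Real.log (p i / q i)) := by
    intro c i
    have hpi := hp i; have hqi := hq i
    have e1 : Real.log (p i / q i + 1) = Real.log (p i + q i) - Real.log (q i) := by
      rw [show p i / q i + 1 = (p i + q i)/ q i by field_simp,
        Real.log_div (by positivity) hqi.ne']
    have e2 : Real.log (p i / q i) = Real.log (p i) - Real.log (q i) :=
      Real.log_div hpi.ne' hqi.ne'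
    have e3 : Real.log ((p i + q i)/(2 * p i))
        = Real.log (p i + q i) - (Real.log 2 + Real.log (p i)) := by
      rw [Real.log_div (by positivity) (by positivity), Real.log_mul two_ne_zero hpi.ne']
    unfold Ff
    rw [e1, e2, e3]
    field_simp
    ring
  have hsum : ∀ c : ℝ, ∑ i, q i * Ff c (p i / q i)
      = (∑ i, ((p i + q i)/2) * Real.log ((p i + q i)/(2 * p i)))
        - c * (∑ i, (p i - q i) * Real.log (p i / q i)) := by
    intro c
    rw [Finset.sum_congr rfl fun i _ => key c i]
    rw [Finset.sum_sub_distrib, Finset.sum_add_distrib, ← Finset.mul_sum, ← Finset.sum_div,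
      Finset.sum_sub_distrib, hp1, hq1]
    ring
  have hmem : ∀ i, p i / q i ∈ Set.Icc r R := fun i => ⟨(hrR i).1, (hrR i).2⟩
  constructor
  · have hF2lo : ∀ y ∈ Set.Icc r R, 0 ≤ Ff2 (1/(2*(R+1)^2)) y := by
      intro y hy
      have hy0 : 0 < y := lt_of_lt_of_le hr hy.1
      have hR1 : (0:ℝ) < R + 1 := by linarith
      have heq : Ff2 (1/(2*(R+1)^2)) y = ((R+1)^2 - (y+1)^2) / (2*y^2*(y+1)*(R+1)^2) := by
        unfold Ff2; field_simp; ring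
      rw [heq]
      apply div_nonneg
      · nlinarith [hy.2]
      · positivity
    have h0 : 0 ≤ ∑ i, q i * Ff (1/(2*(R+1)^2)) (p i / q i) :=
      Finset.sum_nonneg fun i _ => mul_nonneg (hq i).le
        (Ff_nonneg _ r R _ hr hr1 h1R (hmem i) hF2lo)
    rw [hsum] at h0
    linarith
  · have hF2hi : ∀ y ∈ Set.Icc r R, Ff2 (1/(2*(r+1)^2)) y ≤ 0 := by
      intro y hy
      have hy0 : 0 < y := lt_of_lt_of_le hr hy.1
      have hr1' : (0:ℝ) < r + 1 := by linarith
      have heq : Ff2 (1/(2*(r+1)^2)) y = ((r+1)^2 - (y+1)^2) / (2*y^2*(y+1)*(r+1)^2) := by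
        unfold Ff2; field_simp; ring
      rw [heq]
      apply div_nonpos_of_nonpos_of_nonneg
      · nlinarith [hy.1]
      · positivity
    have h0 : ∑ i, q i * Ff (1/(2*(r+1)^2)) (p i / q i) ≤ 0 :=
      Finset.sum_nonpos fun i _ => mul_nonpos_of_nonneg_of_nonpos (hq i).le
        (Ff_nonpos _ r R _ hr hr1 h1R (hmem i) hF2hi)
    rw [hsum] at h0
    linarith
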